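/- arXiv:2204.01880 — 2 statements merged into one kernel-verified Lean document; each statement's English description precedes it below -/
import Mathlib

section
/- Let k ≥ 1 and n ≥ 1 be natural numbers, p ≥ 1 a real number, and c ≥ 0 a real number. For each i = 1, …, k let Pᵢ(t) = Σ_{j=1}^{n} a_{ij}·tʲ be a degree-n univariate real polynomial, and let P(x₁, …, x_k) = Σ_{i=1}^{k} Pᵢ(xᵢ). If Σ_{j=1}^{n} j·|a_{ij}| ≤ c / k^{(p−1)/p} for every i = 1, …, k, then for all points (x₁,…,x_k) and (x₁′,…,x_k′) in [−1,1]ᵏ, one has |P(x₁,…,x_k) − P(x₁′,…,x_k′)| ≤ c · (Σ_{q=1}^{k} |x_q − x_q′|ᵖ)^{1/p}; that is, P is a c-fair polynomial with respect to the p-norm distance on [−1,1]ᵏ. -/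
lemma abs_pow_sub_pow_le_one {x y : ℝ} (hx : |x| ≤ 1) (hy : |y| ≤ 1) (j : ℕ) :
    |x ^ j - y ^ j| ≤ j * |x - y| := by
  induction j with
  | zero => simp
  | succ j ih =>
    have h : x ^ (j + 1) - y ^ (j + 1) = x * (x ^ j - y ^ j) + (x - y) * y ^ j := by ring
    have hyj : |y ^ j| ≤ 1 := by
      rw [abs_pow]; exact pow_le_one₀ (abs_nonneg _) hy
    calc |x ^ (j + 1) - y ^ (j + 1)|
        = |x * (x ^ j - y ^ j) + (x - y) * y ^ j| := by rw [h]
      _ ≤ |x * (x ^ j - y ^ j)| + |(x - y) * y ^ j| := abs_add_le _ _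
      _ = |x| * |x ^ j - y ^ j| + |x - y| * |y ^ j| := by rw [abs_mul, abs_mul]
      _ ≤ 1 * ((j : ℝ) * |x - y|) + |x - y| * 1 := by
          gcongr <;> first | exact abs_nonneg _ | assumption
      _ = (↑(j + 1) : ℝ) * |x - y| := by push_cast; ring

/-- A sum of `k` univariate degree-`n` polynomials, one per coordinate, whose
coefficients satisfy `∑ j ∈ Icc 1 n, j * |a i j| ≤ c / k ^ ((p-1)/p)` for
each coordinate `i`, is `c`-fair with respect to the `p`-norm distance on
`[-1, 1]^k`. -/
theorem sum_univariate_polys_c_fair_pnorm (k n : ℕ) (hk : 1 ≤ k) (hn : 1 ≤ n)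
    (p : ℝ) (hp : 1 ≤ p) (c : ℝ) (hc : 0 ≤ c) (a : Fin k → ℕ → ℝ)
    (ha : ∀ i, ∑ j ∈ Finset.Icc 1 n, (j : ℝ) * |a i j| ≤
      c / (k : ℝ) ^ ((p - 1) / p)) :
    ∀ x x' : Fin k → ℝ, (∀ i, |x i| ≤ 1) → (∀ i, |x' i| ≤ 1) →
      |(∑ i, ∑ j ∈ Finset.Icc 1 n, a i j * x i ^ j) -
          (∑ i, ∑ j ∈ Finset.Icc 1 n, a i j * x' i ^ j)| ≤
        c * (∑ q, |x q - x' q| ^ p) ^ (1 / p) := by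
  intro x x' hx hx'
  have hp0 : 0 < p := lt_of_lt_of_le one_pos hp
  have hkR : (0 : ℝ) < (k : ℝ) := by exact_mod_cast hk
  have hA : (0 : ℝ) < (k : ℝ) ^ ((p - 1) / p) := Real.rpow_pos_of_pos hkR _
  set d : Fin k → ℝ := fun q => |x q - x' q| with hd
  have hdnn : ∀ q, 0 ≤ d q := fun q => abs_nonneg _
  -- Step 1: Lipschitz bound in the ℓ¹ distance
  have step1 : |(∑ i, ∑ j ∈ Finset.Icc 1 n, a i j * x i ^ j) -
      (∑ i, ∑ j ∈ Finset.Icc 1 n, a i j * x' i ^ j)| ≤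
      (c / (k : ℝ) ^ ((p - 1) / p)) * ∑ q, d q := by
    rw [← Finset.sum_sub_distrib, Finset.mul_sum]
    refine (Finset.abs_sum_le_sum_abs _ _).trans (Finset.sum_le_sum fun i _ => ?_)
    rw [← Finset.sum_sub_distrib]
    refine (Finset.abs_sum_le_sum_abs _ _).trans ?_
    calc ∑ j ∈ Finset.Icc 1 n, |a i j * x i ^ j - a i j * x' i ^ j|
        ≤ ∑ j ∈ Finset.Icc 1 n, (j : ℝ) * |a i j| * d i := by
          refine Finset.sum_le_sum fun j _ => ?_
          rw [← mul_sub, abs_mul]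
          calc |a i j| * |x i ^ j - x' i ^ j|
              ≤ |a i j| * ((j : ℝ) * d i) :=
                mul_le_mul_of_nonneg_left (abs_pow_sub_pow_le_one (hx i) (hx' i) j)
                  (abs_nonneg _)
            _ = (j : ℝ) * |a i j| * d i := by ring
      _ = (∑ j ∈ Finset.Icc 1 n, (j : ℝ) * |a i j|) * d i := by
          rw [Finset.sum_mul]
      _ ≤ (c / (k : ℝ) ^ ((p - 1) / p)) * d i :=
          mul_le_mul_of_nonneg_right (ha i) (hdnn i)
  -- Step 2: ℓ¹ vs ℓᵖ via weighted Hölder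
  have step2 : ∑ q, d q ≤
      (k : ℝ) ^ ((p - 1) / p) * (∑ q, d q ^ p) ^ (1 / p) := by
    have h := Real.inner_le_weight_mul_Lp_of_nonneg Finset.univ hp (fun _ => 1) d
      (fun _ => zero_le_one) hdnn
    simp only [one_mul, Finset.sum_const, Finset.card_univ, Fintype.card_fin,
      nsmul_eq_mul, mul_one] at h
    have he : 1 - p⁻¹ = (p - 1) / p := by field_simp
    have he2 : p⁻¹ = 1 / p := (one_div p).symm
    rwa [he, he2] at h
  have hS : 0 ≤ (∑ q, d q ^ p) ^ (1 / p) := by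
    apply Real.rpow_nonneg
    exact Finset.sum_nonneg fun q _ => Real.rpow_nonneg (hdnn q) _
  calc |(∑ i, ∑ j ∈ Finset.Icc 1 n, a i j * x i ^ j) -
      (∑ i, ∑ j ∈ Finset.Icc 1 n, a i j * x' i ^ j)|
      ≤ (c / (k : ℝ) ^ ((p - 1) / p)) * ∑ q, d q := step1
    _ ≤ (c / (k : ℝ) ^ ((p - 1) / p)) *
        ((k : ℝ) ^ ((p - 1) / p) * (∑ q, d q ^ p) ^ (1 / p)) := by
        exact mul_le_mul_of_nonneg_left step2 (div_nonneg hc hA.le)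
    _ = c * (∑ q, d q ^ p) ^ (1 / p) := by
        field_simp
end

section
/- Let k ≥ 1 and n ≥ 1 be natural numbers, p ≥ 1 a real number, and c ≥ 0 a real number. For each i = 1, …, k let Pᵢ(t) = Σ_{j=1}^{n} a_{ij}·tʲ be a degree-n univariate real polynomial, and let P(x₁, …, x_k) = Σ_{i=1}^{k} Pᵢ(xᵢ). If |a_{ij}| ≤ 6·j·c / (n·(n+1)·(2n+1)·k^{(p−1)/p}) for every i = 1, …, k and j = 1, …, n, then for all points (x₁,…,x_k) and (x₁′,…,x_k′) in [−1,1]ᵏ, one has |P(x₁,…,x_k) − P(x₁′,…,x_k′)| ≤ c · (Σ_{q=1}^{k} |x_q − x_q′|ᵖ)^{1/p}; that is, P is a c-fair polynomial with respect to the p-norm distance on [−1,1]ᵏ. -/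
lemma abs_pow_sub_pow_le' (x y : ℝ) (hx : |x| ≤ 1) (hy : |y| ≤ 1) (j : ℕ) :
    |x ^ j - y ^ j| ≤ (j : ℝ) * |x - y| := by
  calc |x ^ j - y ^ j| = |(∑ i ∈ Finset.range j, x ^ i * y ^ (j - 1 - i)) * (x - y)| := by
        rw [geom_sum₂_mul x y j]
    _ ≤ |∑ i ∈ Finset.range j, x ^ i * y ^ (j - 1 - i)| * |x - y| := by rw [abs_mul]
    _ ≤ (j : ℝ) * |x - y| := by
        refine mul_le_mul_of_nonneg_right ?_ (abs_nonneg _)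
        calc |∑ i ∈ Finset.range j, x ^ i * y ^ (j - 1 - i)|
            ≤ ∑ i ∈ Finset.range j, |x ^ i * y ^ (j - 1 - i)| :=
              Finset.abs_sum_le_sum_abs _ _
          _ ≤ ∑ _i ∈ Finset.range j, (1 : ℝ) := by
              refine Finset.sum_le_sum fun i _ => ?_
              rw [abs_mul, abs_pow, abs_pow]
              exact mul_le_one₀ (pow_le_one₀ (abs_nonneg _) hx)
                (pow_nonneg (abs_nonneg _) _) (pow_le_one₀ (abs_nonneg _) hy)
          _ = (j : ℝ) := by simp

lemma sum_sq_Icc (n : ℕ) :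
    (∑ j ∈ Finset.Icc 1 n, (j : ℝ) * (j : ℝ)) =
      (n : ℝ) * ((n : ℝ) + 1) * (2 * (n : ℝ) + 1) / 6 := by
  induction n with
  | zero => simp
  | succ m ih =>
      rw [Finset.sum_Icc_succ_top (by omega : 1 ≤ m + 1), ih]
      push_cast
      ring

/-- A sum of `k` univariate degree-`n` polynomials, one per coordinate, whose
coefficients satisfy `|a i j| ≤ 6 j c / (n (n+1) (2n+1) k ^ ((p-1)/p))`, is
`c`-fair with respect to the `p`-norm distance on `[-1, 1]^k`. -/
theorem sum_univariate_polys_linear_bounds_c_fair_pnorm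
    (k n : ℕ) (hk : 1 ≤ k) (hn : 1 ≤ n)
    (p : ℝ) (hp : 1 ≤ p) (c : ℝ) (hc : 0 ≤ c) (a : Fin k → ℕ → ℝ)
    (ha : ∀ i, ∀ j ∈ Finset.Icc 1 n,
      |a i j| ≤ 6 * (j : ℝ) * c /
        ((n : ℝ) * ((n : ℝ) + 1) * (2 * (n : ℝ) + 1) *
          (k : ℝ) ^ ((p - 1) / p))) :
    ∀ x x' : Fin k → ℝ, (∀ i, |x i| ≤ 1) → (∀ i, |x' i| ≤ 1) →
      |(∑ i, ∑ j ∈ Finset.Icc 1 n, a i j * x i ^ j) -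
          (∑ i, ∑ j ∈ Finset.Icc 1 n, a i j * x' i ^ j)| ≤
        c * (∑ q, |x q - x' q| ^ p) ^ (1 / p) := by
  intro x x' hx hx'
  set K : ℝ := (k : ℝ) ^ ((p - 1) / p) with hK
  have hk0 : (0 : ℝ) < (k : ℝ) := by exact_mod_cast hk
  have hKpos : 0 < K := Real.rpow_pos_of_pos hk0 _
  have hn0 : (0 : ℝ) < (n : ℝ) := by exact_mod_cast hn
  have hNpos : (0 : ℝ) < (n : ℝ) * ((n : ℝ) + 1) * (2 * (n : ℝ) + 1) := by positivity
  set d : Fin k → ℝ := fun i => |x i - x' i| with hd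
  have hdnn : ∀ i, 0 ≤ d i := fun i => abs_nonneg _
  -- Step 1
  have step1 : |(∑ i, ∑ j ∈ Finset.Icc 1 n, a i j * x i ^ j) -
      (∑ i, ∑ j ∈ Finset.Icc 1 n, a i j * x' i ^ j)| ≤ (c / K) * ∑ i, d i := by
    rw [← Finset.sum_sub_distrib]
    refine (Finset.abs_sum_le_sum_abs _ _).trans ?_
    rw [Finset.mul_sum]
    refine Finset.sum_le_sum fun i _ => ?_
    rw [← Finset.sum_sub_distrib]
    refine (Finset.abs_sum_le_sum_abs _ _).trans ?_
    have hbd : ∀ j ∈ Finset.Icc 1 n, |a i j * x i ^ j - a i j * x' i ^ j| ≤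
        (6 * (j : ℝ) * c / ((n : ℝ) * ((n : ℝ) + 1) * (2 * (n : ℝ) + 1) * K)) *
          ((j : ℝ) * d i) := by
      intro j hj
      rw [← mul_sub, abs_mul]
      refine mul_le_mul (ha i j hj) (abs_pow_sub_pow_le' _ _ (hx i) (hx' i) j)
        (abs_nonneg _) ?_
      positivity
    refine (Finset.sum_le_sum hbd).trans ?_
    have hsum : (∑ j ∈ Finset.Icc 1 n,
        (6 * (j : ℝ) * c / ((n : ℝ) * ((n : ℝ) + 1) * (2 * (n : ℝ) + 1) * K)) *
          ((j : ℝ) * d i)) =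
        (6 * c / ((n : ℝ) * ((n : ℝ) + 1) * (2 * (n : ℝ) + 1) * K)) * d i *
          (∑ j ∈ Finset.Icc 1 n, (j : ℝ) * (j : ℝ)) := by
      rw [Finset.mul_sum]
      exact Finset.sum_congr rfl fun j _ => by ring
    rw [hsum, sum_sq_Icc]
    refine le_of_eq ?_
    field_simp
  -- Step 2: Hölder
  have step2 : ∑ i, d i ≤ K * (∑ q, d q ^ p) ^ (1 / p) := by
    rcases eq_or_lt_of_le hp with hp1 | hp1
    · have : ∀ q, d q ^ p = d q := fun q => by rw [← hp1, Real.rpow_one]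
      simp only [this, ← hp1]
      rw [hK, ← hp1]
      simp [Real.rpow_one]
    · have hpq : p.HolderConjugate (Real.conjExponent p) :=
        Real.HolderConjugate.conjExponent hp1
      have hH := Real.inner_le_Lp_mul_Lq (s := Finset.univ) d (fun _ => (1 : ℝ)) hpq
      simp only [mul_one, abs_one, Real.one_rpow, Finset.sum_const,
        Finset.card_univ, Fintype.card_fin, nsmul_eq_mul] at hH
      have habs : ∀ q, |d q| = d q := fun q => abs_of_nonneg (hdnn q)
      simp only [habs] at hH
      have h1q : 1 / Real.conjExponent p = (p - 1) / p := by
        rw [Real.conjExponent, one_div_div]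
      rw [h1q] at hH
      calc ∑ i, d i ≤ (∑ q, d q ^ p) ^ (1 / p) * (k : ℝ) ^ ((p - 1) / p) := hH
        _ = K * (∑ q, d q ^ p) ^ (1 / p) := by rw [mul_comm, hK]
  calc |(∑ i, ∑ j ∈ Finset.Icc 1 n, a i j * x i ^ j) -
      (∑ i, ∑ j ∈ Finset.Icc 1 n, a i j * x' i ^ j)| ≤ (c / K) * ∑ i, d i := step1
    _ ≤ (c / K) * (K * (∑ q, d q ^ p) ^ (1 / p)) := by
        exact mul_le_mul_of_nonneg_left step2 (div_nonneg hc hKpos.le)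
    _ = c * (∑ q, d q ^ p) ^ (1 / p) := by
        field_simp
end
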